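/- For 1 ≤ p < ∞, c > 0, ε > 0 and base metric d, the LP graph GOSPA distance d̄^{(c,ε)} is a metric on the space of undirected unweighted graphs with node attributes: for all graphs X, Y, Z, (i) d̄^{(c,ε)}(X,Y) = 0 if and only if X = Y; (ii) d̄^{(c,ε)}(X,Y) = d̄^{(c,ε)}(Y,X); (iii) d̄^{(c,ε)}(X,Y) ≤ d̄^{(c,ε)}(X,Z) + d̄^{(c,ε)}(Z,Y). -/

import Mathlib

open scoped BigOperators Matrix

namespace GraphGOSPA

/-- An undirected unweighted graph with node attributes in a metric space `𝕏`:
a finite list of distinct nodes together with a symmetric `{0,1}`-valued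
adjacency matrix with zero diagonal. -/
structure Graph (𝕏 : Type*) [MetricSpace 𝕏] where
  n : ℕ
  nodes : Fin n → 𝕏
  nodes_inj : Function.Injective nodes
  A : Matrix (Fin n) (Fin n) ℝ
  A_symm : A.IsSymm
  A_01 : ∀ i j, A i j = 0 ∨ A i j = 1
  A_diag : ∀ i, A i i = 0

variable {𝕏 : Type*} [MetricSpace 𝕏]

/-- Componentwise 1-norm of a matrix. -/
def onorm {m n : ℕ} (M : Matrix (Fin m) (Fin n) ℝ) : ℝ :=
  ∑ i, ∑ j, |M i j|

/-- The top-left `m × n` block of an `(m+1) × (n+1)` matrix. -/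
def topLeft {m n : ℕ} (W : Matrix (Fin (m+1)) (Fin (n+1)) ℝ) :
    Matrix (Fin m) (Fin n) ℝ :=
  fun i j => W i.castSucc j.castSucc

/-- The set `𝒲_{X,Y}` of binary assignment matrices: entries in `{0,1}`,
each of the first `nY` columns sums to 1, each of the first `nX` rows sums to 1,
and the bottom-right corner is 0. -/
def Wset (nX nY : ℕ) : Set (Matrix (Fin (nX+1)) (Fin (nY+1)) ℝ) :=
  {W | (∀ i j, W i j = 0 ∨ W i j = 1) ∧
    (∀ j : Fin nY, ∑ i, W i j.castSucc = 1) ∧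
    (∀ i : Fin nX, ∑ j, W i.castSucc j = 1) ∧
    W (Fin.last nX) (Fin.last nY) = 0}

/-- The relaxed set `𝒲̄_{X,Y}`: nonnegative entries, with the same
row/column sum constraints and zero bottom-right corner. -/
def WbarSet (nX nY : ℕ) : Set (Matrix (Fin (nX+1)) (Fin (nY+1)) ℝ) :=
  {W | (∀ i j, 0 ≤ W i j) ∧
    (∀ j : Fin nY, ∑ i, W i j.castSucc = 1) ∧
    (∀ i : Fin nX, ∑ j, W i.castSucc j = 1) ∧
    W (Fin.last nX) (Fin.last nY) = 0}

/-- The cost matrix `D_{X,Y}`. -/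
noncomputable def Dmat (p c : ℝ) (X Y : Graph 𝕏) :
    Matrix (Fin (X.n+1)) (Fin (Y.n+1)) ℝ :=
  fun i j =>
    if hi : (i : ℕ) < X.n then
      if hj : (j : ℕ) < Y.n then dist (X.nodes ⟨i, hi⟩) (Y.nodes ⟨j, hj⟩) ^ p
      else c ^ p / 2
    else if (j : ℕ) < Y.n then c ^ p / 2 else 0

/-- The graph GOSPA objective `tr[D_{X,Y}ᵀ W] + (ε^p/2) ‖A_X W' − W' A_Y‖`. -/
noncomputable def obj (p c ε : ℝ) (X Y : Graph 𝕏)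
    (W : Matrix (Fin (X.n+1)) (Fin (Y.n+1)) ℝ) : ℝ :=
  Matrix.trace ((Dmat p c X Y)ᵀ * W) +
    ε ^ p / 2 * onorm (X.A * topLeft W - topLeft W * Y.A)

/-- The graph GOSPA distance (minimum over binary assignment matrices). -/
noncomputable def gospa (p c ε : ℝ) (X Y : Graph 𝕏) : ℝ :=
  sInf {v | ∃ W ∈ Wset X.n Y.n, v = obj p c ε X Y W} ^ (1 / p)

/-- The LP graph GOSPA distance (minimum over relaxed assignment matrices). -/
noncomputable def gospaLP (p c ε : ℝ) (X Y : Graph 𝕏) : ℝ :=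
  sInf {v | ∃ W ∈ WbarSet X.n Y.n, v = obj p c ε X Y W} ^ (1 / p)

/-- The node set of a graph. -/
def nodeSet (X : Graph 𝕏) : Set 𝕏 := Set.range X.nodes

/-- The edge set of a graph, as a set of unordered pairs of attributes. -/
def edgeSet (X : Graph 𝕏) : Set (Sym2 𝕏) :=
  {e | ∃ i j, X.A i j = 1 ∧ e = s(X.nodes i, X.nodes j)}

/-- Two graphs are equal when they have the same node set and the same edge set. -/
def GraphEq (X Y : Graph 𝕏) : Prop :=
  nodeSet X = nodeSet Y ∧ edgeSet X = edgeSet Y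

-- evaluation lemmas for Dmat
lemma Dmat_cc (p c : ℝ) (X Y : Graph 𝕏) (i : Fin X.n) (j : Fin Y.n) :
    Dmat p c X Y i.castSucc j.castSucc = dist (X.nodes i) (Y.nodes j) ^ p := by
  simp [Dmat, i.is_lt, j.is_lt]

lemma Dmat_cl (p c : ℝ) (X Y : Graph 𝕏) (i : Fin X.n) :
    Dmat p c X Y i.castSucc (Fin.last Y.n) = c ^ p / 2 := by
  simp [Dmat, i.is_lt]

lemma Dmat_lc (p c : ℝ) (X Y : Graph 𝕏) (j : Fin Y.n) :
    Dmat p c X Y (Fin.last X.n) j.castSucc = c ^ p / 2 := by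
  simp [Dmat, j.is_lt]

lemma Dmat_ll (p c : ℝ) (X Y : Graph 𝕏) :
    Dmat p c X Y (Fin.last X.n) (Fin.last Y.n) = 0 := by
  simp [Dmat]

lemma trace_eq_sum {m n : ℕ} (D W : Matrix (Fin m) (Fin n) ℝ) :
    Matrix.trace (Dᵀ * W) = ∑ i, ∑ j, D i j * W i j := by
  rw [Finset.sum_comm]
  simp [Matrix.trace, Matrix.mul_apply, Matrix.diag]

lemma trace_formula (p c : ℝ) (X Y : Graph 𝕏)
    (W : Matrix (Fin (X.n+1)) (Fin (Y.n+1)) ℝ) (hW : W (Fin.last X.n) (Fin.last Y.n) = 0) :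
    Matrix.trace ((Dmat p c X Y)ᵀ * W) =
      (∑ i : Fin X.n, ∑ j : Fin Y.n,
        dist (X.nodes i) (Y.nodes j) ^ p * W i.castSucc j.castSucc)
      + (∑ i : Fin X.n, c ^ p / 2 * W i.castSucc (Fin.last Y.n))
      + (∑ j : Fin Y.n, c ^ p / 2 * W (Fin.last X.n) j.castSucc) := by
  rw [trace_eq_sum]
  rw [show (∑ i, ∑ j, Dmat p c X Y i j * W i j)
      = ∑ i : Fin (X.n+1), ((∑ j : Fin Y.n, Dmat p c X Y i j.castSucc * W i j.castSucc)
          + Dmat p c X Y i (Fin.last Y.n) * W i (Fin.last Y.n)) from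
    Finset.sum_congr rfl fun i _ => Fin.sum_univ_castSucc _]
  rw [Fin.sum_univ_castSucc]
  simp only [Dmat_cc, Dmat_cl, Dmat_lc, Dmat_ll, hW, mul_zero, zero_mul, add_zero]
  rw [Finset.sum_add_distrib]


lemma Dmat_nonneg (p c : ℝ) (hp : 1 ≤ p) (hc : 0 < c) (X Y : Graph 𝕏)
    (i : Fin (X.n+1)) (j : Fin (Y.n+1)) : 0 ≤ Dmat p c X Y i j := by
  have hcp : (0:ℝ) ≤ c ^ p / 2 := by positivity
  unfold Dmat
  split_ifs with h1 h2 h3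
  · exact Real.rpow_nonneg dist_nonneg p
  · exact hcp
  · exact hcp
  · exact le_rfl

lemma onorm_nonneg {m n : ℕ} (M : Matrix (Fin m) (Fin n) ℝ) : 0 ≤ onorm M :=
  Finset.sum_nonneg fun i _ => Finset.sum_nonneg fun j _ => abs_nonneg _

lemma eps_nonneg {p ε : ℝ} (hp : 1 ≤ p) (hε : 0 < ε) : 0 ≤ ε ^ p / 2 := by positivity

lemma obj_nonneg (p c ε : ℝ) (hp : 1 ≤ p) (hc : 0 < c) (hε : 0 < ε) (X Y : Graph 𝕏)
    {W : Matrix (Fin (X.n+1)) (Fin (Y.n+1)) ℝ} (hW : W ∈ WbarSet X.n Y.n) :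
    0 ≤ obj p c ε X Y W := by
  unfold obj
  have h1 : 0 ≤ Matrix.trace ((Dmat p c X Y)ᵀ * W) := by
    rw [trace_eq_sum]
    exact Finset.sum_nonneg fun i _ => Finset.sum_nonneg fun j _ =>
      mul_nonneg (Dmat_nonneg p c hp hc X Y i j) (hW.1 i j)
  exact add_nonneg h1 (mul_nonneg (eps_nonneg hp hε) (onorm_nonneg _))

/-- The trivial plan sending everything to the dummy. -/
noncomputable def W0 (nX nY : ℕ) : Matrix (Fin (nX+1)) (Fin (nY+1)) ℝ :=
  fun i j => if (i:ℕ) = nX ∧ (j:ℕ) < nY then 1 else if (i:ℕ) < nX ∧ (j:ℕ) = nY then 1 else 0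

lemma W0_mem (nX nY : ℕ) : W0 nX nY ∈ WbarSet nX nY := by
  refine ⟨fun i j => ?_, fun j => ?_, fun i => ?_, ?_⟩
  · unfold W0; split_ifs <;> norm_num
  · rw [Fin.sum_univ_castSucc]
    have h1 : ∀ i : Fin nX, W0 nX nY i.castSucc j.castSucc = 0 := by
      intro i; simp [W0, Fin.is_lt, (Fin.is_lt i).ne, (Fin.is_lt j).ne]
    have h2 : W0 nX nY (Fin.last nX) j.castSucc = 1 := by
      simp [W0, Fin.is_lt]
    simp [h1, h2]
  · rw [Fin.sum_univ_castSucc]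
    have h1 : ∀ j : Fin nY, W0 nX nY i.castSucc j.castSucc = 0 := by
      intro j; simp [W0, Fin.is_lt, (Fin.is_lt i).ne, (Fin.is_lt j).ne]
    have h2 : W0 nX nY i.castSucc (Fin.last nY) = 1 := by
      simp [W0, Fin.is_lt, (Fin.is_lt i).ne]
    simp [h1, h2]
  · simp [W0]

lemma WbarSet_nonempty (nX nY : ℕ) : (WbarSet nX nY).Nonempty := ⟨W0 nX nY, W0_mem nX nY⟩

lemma WbarSet_bounded {nX nY : ℕ} {W : Matrix (Fin (nX+1)) (Fin (nY+1)) ℝ}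
    (hW : W ∈ WbarSet nX nY) (i : Fin (nX+1)) (j : Fin (nY+1)) : W i j ∈ Set.Icc (0:ℝ) 1 := by
  obtain ⟨hpos, hcol, hrow, hcorner⟩ := hW
  refine ⟨hpos i j, ?_⟩
  rcases Fin.eq_castSucc_or_eq_last j with ⟨j0, rfl⟩ | rfl
  · calc W i j0.castSucc ≤ ∑ i, W i j0.castSucc :=
          Finset.single_le_sum (fun i _ => hpos i _) (Finset.mem_univ _)
      _ = 1 := hcol j0
  · rcases Fin.eq_castSucc_or_eq_last i with ⟨i0, rfl⟩ | rfl
    · calc W i0.castSucc (Fin.last nY) ≤ ∑ j, W i0.castSucc j :=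
            Finset.single_le_sum (fun j _ => hpos _ j) (Finset.mem_univ _)
        _ = 1 := hrow i0
    · rw [hcorner]; norm_num

lemma isClosed_WbarSet (nX nY : ℕ) : IsClosed (WbarSet nX nY) := by
  have hev : ∀ (i : Fin (nX+1)) (j : Fin (nY+1)),
      Continuous (fun W : Matrix (Fin (nX+1)) (Fin (nY+1)) ℝ => W i j) :=
    fun i j => continuous_apply_apply i j
  have h1 : IsClosed {W : Matrix (Fin (nX+1)) (Fin (nY+1)) ℝ | ∀ i j, 0 ≤ W i j} := by
    have : {W : Matrix (Fin (nX+1)) (Fin (nY+1)) ℝ | ∀ i j, 0 ≤ W i j}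
        = ⋂ i, ⋂ j, {W | 0 ≤ W i j} := by ext W; simp
    rw [this]
    exact isClosed_iInter fun i => isClosed_iInter fun j =>
      isClosed_le continuous_const (hev i j)
  have h2 : IsClosed {W : Matrix (Fin (nX+1)) (Fin (nY+1)) ℝ |
      ∀ j : Fin nY, ∑ i, W i j.castSucc = 1} := by
    have : {W : Matrix (Fin (nX+1)) (Fin (nY+1)) ℝ | ∀ j : Fin nY, ∑ i, W i j.castSucc = 1}
        = ⋂ j : Fin nY, {W | ∑ i, W i j.castSucc = 1} := by ext W; simp
    rw [this]
    exact isClosed_iInter fun j => isClosed_eq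
      (continuous_finset_sum _ fun i _ => hev i j.castSucc) continuous_const
  have h3 : IsClosed {W : Matrix (Fin (nX+1)) (Fin (nY+1)) ℝ |
      ∀ i : Fin nX, ∑ j, W i.castSucc j = 1} := by
    have : {W : Matrix (Fin (nX+1)) (Fin (nY+1)) ℝ | ∀ i : Fin nX, ∑ j, W i.castSucc j = 1}
        = ⋂ i : Fin nX, {W | ∑ j, W i.castSucc j = 1} := by ext W; simp
    rw [this]
    exact isClosed_iInter fun i => isClosed_eq
      (continuous_finset_sum _ fun j _ => hev i.castSucc j) continuous_const
  have h4 : IsClosed {W : Matrix (Fin (nX+1)) (Fin (nY+1)) ℝ |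
      W (Fin.last nX) (Fin.last nY) = 0} :=
    isClosed_eq (hev _ _) continuous_const
  have : WbarSet nX nY = ({W : Matrix (Fin (nX+1)) (Fin (nY+1)) ℝ | ∀ i j, 0 ≤ W i j}
      ∩ {W | ∀ j : Fin nY, ∑ i, W i j.castSucc = 1}
      ∩ {W | ∀ i : Fin nX, ∑ j, W i.castSucc j = 1}
      ∩ {W | W (Fin.last nX) (Fin.last nY) = 0}) := by
    ext W
    simp only [WbarSet, Set.mem_setOf_eq, Set.mem_inter_iff]
    tauto
  rw [this]
  exact ((h1.inter h2).inter h3).inter h4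

lemma isCompact_WbarSet (nX nY : ℕ) : IsCompact (WbarSet nX nY) := by
  have hsub : WbarSet nX nY ⊆ Set.univ.pi
      (fun _ : Fin (nX+1) => Set.univ.pi (fun _ : Fin (nY+1) => Set.Icc (0:ℝ) 1)) := by
    intro W hW
    refine Set.mem_univ_pi.mpr ?_
    intro i
    rw [Set.mem_univ_pi]
    intro j
    exact WbarSet_bounded hW i j
  have hcomp : IsCompact (Set.univ.pi
      (fun _ : Fin (nX+1) => Set.univ.pi (fun _ : Fin (nY+1) => Set.Icc (0:ℝ) 1))) :=
    isCompact_univ_pi fun _ => isCompact_univ_pi fun _ => isCompact_Icc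
  exact hcomp.of_isClosed_subset (isClosed_WbarSet nX nY) hsub

lemma continuous_obj (p c ε : ℝ) (X Y : Graph 𝕏) :
    Continuous (fun W : Matrix (Fin (X.n+1)) (Fin (Y.n+1)) ℝ => obj p c ε X Y W) := by
  have htop : Continuous (fun W : Matrix (Fin (X.n+1)) (Fin (Y.n+1)) ℝ => topLeft W) :=
    continuous_matrix fun i j => continuous_apply_apply _ _
  have h1 : Continuous (fun W : Matrix (Fin (X.n+1)) (Fin (Y.n+1)) ℝ =>
      Matrix.trace ((Dmat p c X Y)ᵀ * W)) :=
    (continuous_const.matrix_mul continuous_id).matrix_trace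
  have h2 : Continuous (fun W : Matrix (Fin (X.n+1)) (Fin (Y.n+1)) ℝ =>
      onorm (X.A * topLeft W - topLeft W * Y.A)) := by
    apply continuous_finset_sum _ fun i _ => continuous_finset_sum _ fun j _ => ?_
    exact (((continuous_const.matrix_mul htop).sub
      (htop.matrix_mul continuous_const)).matrix_elem i j).abs
  exact h1.add (continuous_const.mul h2)

lemma exists_min (p c ε : ℝ) (hp : 1 ≤ p) (hc : 0 < c) (hε : 0 < ε) (X Y : Graph 𝕏) :
    ∃ W ∈ WbarSet X.n Y.n,
      sInf {v | ∃ W' ∈ WbarSet X.n Y.n, v = obj p c ε X Y W'} = obj p c ε X Y W ∧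
      (∀ W' ∈ WbarSet X.n Y.n, obj p c ε X Y W ≤ obj p c ε X Y W') := by
  obtain ⟨W, hWmem, hinf, hle⟩ := (isCompact_WbarSet X.n Y.n).exists_sInf_image_eq_and_le
    (WbarSet_nonempty X.n Y.n) (continuous_obj p c ε X Y).continuousOn
  refine ⟨W, hWmem, ?_, hle⟩
  have : {v | ∃ W' ∈ WbarSet X.n Y.n, v = obj p c ε X Y W'}
      = obj p c ε X Y '' WbarSet X.n Y.n := by
    ext v; simp [eq_comm, Set.mem_image]
  rw [this, hinf]

lemma onorm_transpose {m n : ℕ} (M : Matrix (Fin m) (Fin n) ℝ) : onorm Mᵀ = onorm M := by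
  unfold onorm
  rw [Finset.sum_comm]
  simp [Matrix.transpose_apply]

lemma onorm_neg {m n : ℕ} (M : Matrix (Fin m) (Fin n) ℝ) : onorm (-M) = onorm M := by
  unfold onorm; simp

lemma topLeft_transpose {m n : ℕ} (W : Matrix (Fin (m+1)) (Fin (n+1)) ℝ) :
    topLeft Wᵀ = (topLeft W)ᵀ := rfl

lemma transpose_mem_WbarSet {nX nY : ℕ} {W : Matrix (Fin (nX+1)) (Fin (nY+1)) ℝ}
    (hW : W ∈ WbarSet nX nY) : Wᵀ ∈ WbarSet nY nX := by
  obtain ⟨hpos, hcol, hrow, hcorner⟩ := hW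
  exact ⟨fun i j => hpos j i, fun i => hrow i, fun j => hcol j, hcorner⟩

lemma obj_transpose (p c ε : ℝ) (X Y : Graph 𝕏)
    (W : Matrix (Fin (X.n+1)) (Fin (Y.n+1)) ℝ) :
    obj p c ε Y X Wᵀ = obj p c ε X Y W := by
  unfold obj
  congr 1
  · rw [trace_eq_sum, trace_eq_sum, Finset.sum_comm]
    refine Finset.sum_congr rfl fun i _ => Finset.sum_congr rfl fun j _ => ?_
    have : Dmat p c Y X j i = Dmat p c X Y i j := by
      unfold Dmat
      rcases lt_or_ge (i:ℕ) X.n with hi | hi <;> rcases lt_or_ge (j:ℕ) Y.n with hj | hj <;>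
        simp [hi, hj, Nat.not_lt_of_le hi, Nat.not_lt_of_le hj, dist_comm]
    rw [this, Matrix.transpose_apply]
  · congr 1
    have hAX : X.Aᵀ = X.A := X.A_symm
    have hAY : Y.Aᵀ = Y.A := Y.A_symm
    have : Y.A * topLeft Wᵀ - topLeft Wᵀ * X.A
        = (-(X.A * topLeft W - topLeft W * Y.A))ᵀ := by
      rw [topLeft_transpose, neg_sub, Matrix.transpose_sub, Matrix.transpose_mul,
        Matrix.transpose_mul, hAX, hAY]
    rw [this, onorm_transpose, onorm_neg]

lemma A_symm_apply (X : Graph 𝕏) (i j : Fin X.n) : X.A j i = X.A i j := by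
  conv_lhs => rw [← X.A_symm]
  rfl

lemma graphEq_of_perm {X Y : Graph 𝕏} (σ : Fin X.n → Fin Y.n)
    (hbij : Function.Bijective σ)
    (hnode : ∀ i, Y.nodes (σ i) = X.nodes i)
    (hA : ∀ i i', X.A i i' = Y.A (σ i) (σ i')) : GraphEq X Y := by
  constructor
  · apply Set.eq_of_subset_of_subset
    · rintro x ⟨i, rfl⟩; exact ⟨σ i, hnode i⟩
    · rintro x ⟨j, rfl⟩
      obtain ⟨i, rfl⟩ := hbij.2 j
      exact ⟨i, (hnode i).symm⟩
  · apply Set.eq_of_subset_of_subset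
    · rintro e ⟨i, j, hij, rfl⟩
      exact ⟨σ i, σ j, (hA i j) ▸ hij, by rw [hnode, hnode]⟩
    · rintro e ⟨i, j, hij, rfl⟩
      obtain ⟨i0, rfl⟩ := hbij.2 i
      obtain ⟨j0, rfl⟩ := hbij.2 j
      exact ⟨i0, j0, (hA i0 j0).symm ▸ hij, by rw [hnode, hnode]⟩

lemma perm_of_graphEq {X Y : Graph 𝕏} (h : GraphEq X Y) :
    ∃ σ : Fin X.n → Fin Y.n, Function.Bijective σ ∧
      (∀ i, Y.nodes (σ i) = X.nodes i) ∧ (∀ i i', X.A i i' = Y.A (σ i) (σ i')) := by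
  obtain ⟨hN, hE⟩ := h
  have hmem : ∀ i, ∃ j, Y.nodes j = X.nodes i := by
    intro i
    have : X.nodes i ∈ nodeSet Y := hN ▸ ⟨i, rfl⟩
    exact this
  choose σ hσ using hmem
  have hinj : Function.Injective σ := fun i i' hii => by
    apply X.nodes_inj
    rw [← hσ i, ← hσ i', hii]
  have hsurj : Function.Surjective σ := by
    intro j
    have : Y.nodes j ∈ nodeSet X := hN ▸ ⟨j, rfl⟩
    obtain ⟨i, hi⟩ := this
    exact ⟨i, Y.nodes_inj (by rw [hσ i, hi])⟩
  refine ⟨σ, ⟨hinj, hsurj⟩, hσ, ?_⟩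
  -- transfer of edges
  have fwd : ∀ i i', X.A i i' = 1 → Y.A (σ i) (σ i') = 1 := by
    intro i i' h1
    have he : s(X.nodes i, X.nodes i') ∈ edgeSet Y := hE ▸ ⟨i, i', h1, rfl⟩
    obtain ⟨a, b, hab, heq⟩ := he
    rw [← hσ i, ← hσ i'] at heq
    rw [Sym2.eq_iff] at heq
    rcases heq with ⟨ha, hb⟩ | ⟨ha, hb⟩
    · rwa [← Y.nodes_inj ha, ← Y.nodes_inj hb] at hab
    · rw [← Y.nodes_inj ha, ← Y.nodes_inj hb] at hab
      rw [A_symm_apply] at hab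
      exact hab
  have bwd : ∀ i i', Y.A (σ i) (σ i') = 1 → X.A i i' = 1 := by
    intro i i' h1
    have he : s(Y.nodes (σ i), Y.nodes (σ i')) ∈ edgeSet X := hE ▸ ⟨σ i, σ i', h1, rfl⟩
    obtain ⟨a, b, hab, heq⟩ := he
    rw [hσ i, hσ i'] at heq
    rw [Sym2.eq_iff] at heq
    rcases heq with ⟨ha, hb⟩ | ⟨ha, hb⟩
    · rwa [← X.nodes_inj ha, ← X.nodes_inj hb] at hab
    · rw [← X.nodes_inj ha, ← X.nodes_inj hb] at hab
      rw [A_symm_apply] at hab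
      exact hab
  intro i i'
  rcases X.A_01 i i' with h0 | h1
  · rcases Y.A_01 (σ i) (σ i') with h0' | h1'
    · rw [h0, h0']
    · rw [bwd i i' h1'] at h0; exact absurd h0 one_ne_zero
  · rw [h1, fwd i i' h1]

open Classical in
noncomputable def permPlan (X Y : Graph 𝕏) (σ : Fin X.n → Fin Y.n) :
    Matrix (Fin (X.n+1)) (Fin (Y.n+1)) ℝ :=
  fun i j => if ∃ i0 : Fin X.n, i = i0.castSucc ∧ j = (σ i0).castSucc then 1 else 0

open Classical in
lemma permPlan_castSucc (X Y : Graph 𝕏) (σ : Fin X.n → Fin Y.n) (i : Fin X.n)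
    (j : Fin (Y.n+1)) :
    permPlan X Y σ i.castSucc j = if j = (σ i).castSucc then 1 else 0 := by
  unfold permPlan
  congr 1
  simp only [eq_iff_iff]
  constructor
  · rintro ⟨i1, h1, h2⟩
    rwa [Fin.castSucc_inj.mp h1]
  · intro h; exact ⟨i, rfl, h⟩

open Classical in
lemma permPlan_last (X Y : Graph 𝕏) (σ : Fin X.n → Fin Y.n) (j : Fin (Y.n+1)) :
    permPlan X Y σ (Fin.last X.n) j = 0 := by
  unfold permPlan
  rw [if_neg]
  rintro ⟨i1, h1, -⟩
  exact (Fin.castSucc_lt_last i1).ne' h1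

lemma topLeft_permPlan (X Y : Graph 𝕏) (σ : Fin X.n → Fin Y.n) (i : Fin X.n) (j : Fin Y.n) :
    topLeft (permPlan X Y σ) i j = if σ i = j then 1 else 0 := by
  unfold topLeft
  rw [permPlan_castSucc]
  congr 1
  simp only [eq_iff_iff, Fin.castSucc_inj]
  exact eq_comm

lemma permPlan_mem (X Y : Graph 𝕏) (σ : Fin X.n → Fin Y.n) (hbij : Function.Bijective σ) :
    permPlan X Y σ ∈ WbarSet X.n Y.n := by
  classical
  let e := Equiv.ofBijective σ hbij
  refine ⟨fun i j => ?_, fun j => ?_, fun i => ?_, ?_⟩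
  · unfold permPlan; split_ifs <;> norm_num
  · rw [Fin.sum_univ_castSucc, permPlan_last, add_zero]
    have : ∀ i : Fin X.n, permPlan X Y σ i.castSucc j.castSucc
        = if i = e.symm j then 1 else 0 := by
      intro i
      rw [permPlan_castSucc]
      congr 1
      simp only [eq_iff_iff, Fin.castSucc_inj]
      constructor
      · intro h
        apply e.injective
        rw [Equiv.apply_symm_apply]
        exact (show e i = j from h.symm)
      · rintro rfl
        exact (e.apply_symm_apply j).symm
    simp [this]
  · have : ∀ j : Fin (Y.n+1), permPlan X Y σ i.castSucc j
        = if j = (σ i).castSucc then 1 else 0 := permPlan_castSucc X Y σ i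
    simp [this]
  · rw [permPlan_last]

lemma obj_permPlan (p c ε : ℝ) (hp : 1 ≤ p) (X Y : Graph 𝕏) (σ : Fin X.n → Fin Y.n)
    (hbij : Function.Bijective σ)
    (hnode : ∀ i, Y.nodes (σ i) = X.nodes i)
    (hA : ∀ i i', X.A i i' = Y.A (σ i) (σ i')) :
    obj p c ε X Y (permPlan X Y σ) = 0 := by
  classical
  have hp0 : p ≠ 0 := by positivity
  unfold obj
  have hcorner : permPlan X Y σ (Fin.last X.n) (Fin.last Y.n) = 0 := permPlan_last X Y σ _
  rw [trace_formula p c X Y _ hcorner]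
  have ht1 : ∀ i : Fin X.n, ∀ j : Fin Y.n,
      dist (X.nodes i) (Y.nodes j) ^ p * permPlan X Y σ i.castSucc j.castSucc = 0 := by
    intro i j
    rw [permPlan_castSucc]
    by_cases h : (j.castSucc : Fin (Y.n+1)) = (σ i).castSucc
    · have : j = σ i := Fin.castSucc_inj.mp h
      subst this
      rw [hnode, dist_self, Real.zero_rpow hp0, zero_mul]
    · rw [if_neg h, mul_zero]
  have ht2 : ∀ i : Fin X.n, permPlan X Y σ i.castSucc (Fin.last Y.n) = 0 := by
    intro i
    rw [permPlan_castSucc, if_neg]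
    exact (Fin.castSucc_lt_last (σ i)).ne'
  have hcomm : X.A * topLeft (permPlan X Y σ) = topLeft (permPlan X Y σ) * Y.A := by
    ext i j
    rw [Matrix.mul_apply, Matrix.mul_apply]
    have e := Equiv.ofBijective σ hbij
    calc (∑ k, X.A i k * topLeft (permPlan X Y σ) k j)
        = ∑ k, if σ k = j then X.A i k else 0 := by
          refine Finset.sum_congr rfl fun k _ => ?_
          rw [topLeft_permPlan]
          split_ifs <;> simp
      _ = ∑ k : Fin Y.n, if k = j then X.A i ((Equiv.ofBijective σ hbij).symm k) else 0 := by
          refine Fintype.sum_equiv (Equiv.ofBijective σ hbij)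
            (fun k => if σ k = j then X.A i k else 0)
            (fun k => if k = j then X.A i ((Equiv.ofBijective σ hbij).symm k) else 0)
            (fun x => ?_)
          have h2 : (Equiv.ofBijective σ hbij).symm (σ x) = x := by
            conv_lhs => rw [show σ x = (Equiv.ofBijective σ hbij) x from rfl]
            exact Equiv.symm_apply_apply _ x
          show (if σ x = j then X.A i x else 0)
              = (if σ x = j then X.A i ((Equiv.ofBijective σ hbij).symm (σ x)) else 0)
          rw [h2]
      _ = X.A i ((Equiv.ofBijective σ hbij).symm j) := by
          rw [Finset.sum_ite_eq' Finset.univ j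
            (fun k => X.A i ((Equiv.ofBijective σ hbij).symm k))]
          simp
      _ = ∑ k, topLeft (permPlan X Y σ) i k * Y.A k j := by
          have hsup : ∀ k, topLeft (permPlan X Y σ) i k * Y.A k j
              = if k = σ i then Y.A k j else 0 := by
            intro k
            rw [topLeft_permPlan]
            split_ifs with h1 h2 h2
            · simp
            · exact absurd h1.symm h2
            · exact absurd h2.symm h1
            · simp
          rw [Finset.sum_congr rfl fun k _ => hsup k, Finset.sum_ite_eq' Finset.univ (σ i)
            (fun k => Y.A k j)]
          simp only [Finset.mem_univ, if_true]
          set j0 := (Equiv.ofBijective σ hbij).symm j with hj0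
          have : j = σ j0 := by
            rw [hj0]
            exact ((Equiv.ofBijective σ hbij).apply_symm_apply j).symm
          rw [this]
          exact hA i j0
  rw [hcomm, sub_self]
  have honorm : onorm (0 : Matrix (Fin X.n) (Fin Y.n) ℝ) = 0 := by
    unfold onorm; simp
  rw [honorm, mul_zero, add_zero]
  have h2 : (∑ i : Fin X.n, ∑ j : Fin Y.n,
      dist (X.nodes i) (Y.nodes j) ^ p * permPlan X Y σ i.castSucc j.castSucc) = 0 :=
    Finset.sum_eq_zero fun i _ => Finset.sum_eq_zero fun j _ => ht1 i j
  have h3 : (∑ i : Fin X.n, c ^ p / 2 * permPlan X Y σ i.castSucc (Fin.last Y.n)) = 0 :=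
    Finset.sum_eq_zero fun i _ => by rw [ht2 i, mul_zero]
  have h4 : (∑ j : Fin Y.n, c ^ p / 2 * permPlan X Y σ (Fin.last X.n) j.castSucc) = 0 :=
    Finset.sum_eq_zero fun j _ => by rw [permPlan_last, mul_zero]
  rw [h2, h3, h4]
  ring

lemma valSet_nonempty (p c ε : ℝ) (X Y : Graph 𝕏) :
    {v | ∃ W ∈ WbarSet X.n Y.n, v = obj p c ε X Y W}.Nonempty :=
  ⟨obj p c ε X Y (W0 X.n Y.n), W0 X.n Y.n, W0_mem X.n Y.n, rfl⟩

lemma valSet_lb (p c ε : ℝ) (hp : 1 ≤ p) (hc : 0 < c) (hε : 0 < ε) (X Y : Graph 𝕏) :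
    ∀ v ∈ {v | ∃ W ∈ WbarSet X.n Y.n, v = obj p c ε X Y W}, 0 ≤ v := by
  rintro v ⟨W, hW, rfl⟩
  exact obj_nonneg p c ε hp hc hε X Y hW

lemma sInf_valSet_nonneg (p c ε : ℝ) (hp : 1 ≤ p) (hc : 0 < c) (hε : 0 < ε) (X Y : Graph 𝕏) :
    0 ≤ sInf {v | ∃ W ∈ WbarSet X.n Y.n, v = obj p c ε X Y W} :=
  le_csInf (valSet_nonempty p c ε X Y) (valSet_lb p c ε hp hc hε X Y)

lemma valSet_bddBelow (p c ε : ℝ) (hp : 1 ≤ p) (hc : 0 < c) (hε : 0 < ε) (X Y : Graph 𝕏) :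
    BddBelow {v | ∃ W ∈ WbarSet X.n Y.n, v = obj p c ε X Y W} :=
  ⟨0, valSet_lb p c ε hp hc hε X Y⟩

lemma graphEq_of_obj_zero (p c ε : ℝ) (hp : 1 ≤ p) (hc : 0 < c) (hε : 0 < ε)
    {X Y : Graph 𝕏} {W : Matrix (Fin (X.n+1)) (Fin (Y.n+1)) ℝ}
    (hW : W ∈ WbarSet X.n Y.n) (hobj : obj p c ε X Y W = 0) : GraphEq X Y := by
  have hp0 : p ≠ 0 := by positivity
  have hcp : (0:ℝ) < c ^ p / 2 := by
    have := Real.rpow_pos_of_pos hc p; linarith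
  have hep : (0:ℝ) < ε ^ p / 2 := by
    have := Real.rpow_pos_of_pos hε p; linarith
  obtain ⟨hpos, hcol, hrow, hcorner⟩ := hW
  unfold obj at hobj
  rw [trace_formula p c X Y W hcorner] at hobj
  set T1 := ∑ i : Fin X.n, ∑ j : Fin Y.n,
    dist (X.nodes i) (Y.nodes j) ^ p * W i.castSucc j.castSucc with hT1def
  set T2 := ∑ i : Fin X.n, c ^ p / 2 * W i.castSucc (Fin.last Y.n) with hT2def
  set T3 := ∑ j : Fin Y.n, c ^ p / 2 * W (Fin.last X.n) j.castSucc with hT3def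
  set E := ε ^ p / 2 * onorm (X.A * topLeft W - topLeft W * Y.A) with hEdef
  have hT1n : 0 ≤ T1 := Finset.sum_nonneg fun i _ => Finset.sum_nonneg fun j _ =>
    mul_nonneg (Real.rpow_nonneg dist_nonneg p) (hpos _ _)
  have hT2n : 0 ≤ T2 := Finset.sum_nonneg fun i _ => mul_nonneg hcp.le (hpos _ _)
  have hT3n : 0 ≤ T3 := Finset.sum_nonneg fun j _ => mul_nonneg hcp.le (hpos _ _)
  have hEn : 0 ≤ E := mul_nonneg hep.le (onorm_nonneg _)
  have hT1 : T1 = 0 := le_antisymm (by linarith) hT1n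
  have hT2 : T2 = 0 := le_antisymm (by linarith) hT2n
  have hT3 : T3 = 0 := le_antisymm (by linarith) hT3n
  have hE : E = 0 := le_antisymm (by linarith) hEn
  -- extract per-entry information
  have hterm1 : ∀ i j, dist (X.nodes i) (Y.nodes j) ^ p * W i.castSucc j.castSucc = 0 := by
    intro i j
    have h1 := (Finset.sum_eq_zero_iff_of_nonneg (fun i _ => Finset.sum_nonneg fun j _ =>
      mul_nonneg (Real.rpow_nonneg dist_nonneg p) (hpos _ _))).mp hT1 i (Finset.mem_univ i)
    exact (Finset.sum_eq_zero_iff_of_nonneg (fun j _ =>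
      mul_nonneg (Real.rpow_nonneg dist_nonneg p) (hpos _ _))).mp h1 j (Finset.mem_univ j)
  have hW0 : ∀ i j, X.nodes i ≠ Y.nodes j → W i.castSucc j.castSucc = 0 := by
    intro i j hne
    have hd : dist (X.nodes i) (Y.nodes j) ^ p ≠ 0 :=
      (Real.rpow_pos_of_pos (dist_pos.mpr hne) p).ne'
    rcases mul_eq_zero.mp (hterm1 i j) with h | h
    · exact absurd h hd
    · exact h
  have hlastcol : ∀ i : Fin X.n, W i.castSucc (Fin.last Y.n) = 0 := by
    intro i
    have := (Finset.sum_eq_zero_iff_of_nonneg (fun i _ =>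
      mul_nonneg hcp.le (hpos _ _))).mp hT2 i (Finset.mem_univ i)
    rcases mul_eq_zero.mp this with h | h
    · exact absurd h hcp.ne'
    · exact h
  have hlastrow : ∀ j : Fin Y.n, W (Fin.last X.n) j.castSucc = 0 := by
    intro j
    have := (Finset.sum_eq_zero_iff_of_nonneg (fun j _ =>
      mul_nonneg hcp.le (hpos _ _))).mp hT3 j (Finset.mem_univ j)
    rcases mul_eq_zero.mp this with h | h
    · exact absurd h hcp.ne'
    · exact h
  have hrow' : ∀ i : Fin X.n, ∑ j : Fin Y.n, W i.castSucc j.castSucc = 1 := by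
    intro i
    have := hrow i
    rwa [Fin.sum_univ_castSucc, hlastcol i, add_zero] at this
  have hcol' : ∀ j : Fin Y.n, ∑ i : Fin X.n, W i.castSucc j.castSucc = 1 := by
    intro j
    have := hcol j
    rwa [Fin.sum_univ_castSucc, hlastrow j, add_zero] at this
  have hex : ∀ i : Fin X.n, ∃ j : Fin Y.n, W i.castSucc j.castSucc ≠ 0 := by
    intro i
    by_contra hno
    push_neg at hno
    have : (∑ j : Fin Y.n, W i.castSucc j.castSucc) = 0 := Finset.sum_eq_zero fun j _ => hno j
    rw [hrow' i] at this
    exact one_ne_zero this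
  choose σ hσ using hex
  have hnode : ∀ i, Y.nodes (σ i) = X.nodes i := by
    intro i
    by_contra hne
    exact hσ i (hW0 i (σ i) (fun h => hne h.symm))
  have hinj : Function.Injective σ := by
    intro i i' h
    apply X.nodes_inj
    rw [← hnode i, ← hnode i', h]
  have hsurj : Function.Surjective σ := by
    intro j
    have hexi : ∃ i : Fin X.n, W i.castSucc j.castSucc ≠ 0 := by
      by_contra hno
      push_neg at hno
      have : (∑ i : Fin X.n, W i.castSucc j.castSucc) = 0 := Finset.sum_eq_zero fun i _ => hno i
      rw [hcol' j] at this
      exact one_ne_zero this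
    obtain ⟨i, hi⟩ := hexi
    have : X.nodes i = Y.nodes j := by
      by_contra hne
      exact hi (hW0 i j hne)
    exact ⟨i, Y.nodes_inj (by rw [hnode i, this])⟩
  have hunique : ∀ i j, j ≠ σ i → W i.castSucc j.castSucc = 0 := by
    intro i j hne
    by_contra h
    have : X.nodes i = Y.nodes j := by
      by_contra hne2
      exact h (hW0 i j hne2)
    exact hne (Y.nodes_inj (by rw [hnode i, this]))
  have hone : ∀ i, W i.castSucc (σ i).castSucc = 1 := by
    intro i
    have := hrow' i
    rwa [Finset.sum_eq_single (σ i) (fun j _ hne => hunique i j hne)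
      (fun h => absurd (Finset.mem_univ _) h)] at this
  have htop : ∀ i j, topLeft W i j = if σ i = j then 1 else 0 := by
    intro i j
    by_cases h : σ i = j
    · rw [if_pos h, ← h]; exact hone i
    · rw [if_neg h]; exact hunique i j (fun hh => h hh.symm)
  -- edge structure
  have honorm0 : onorm (X.A * topLeft W - topLeft W * Y.A) = 0 := by
    rcases mul_eq_zero.mp hE with h | h
    · exact absurd h hep.ne'
    · exact h
  have hmat0 : ∀ i j, (X.A * topLeft W - topLeft W * Y.A) i j = 0 := by
    intro i j
    have h1 := (Finset.sum_eq_zero_iff_of_nonneg (fun i _ => Finset.sum_nonneg fun j _ =>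
      abs_nonneg _)).mp honorm0 i (Finset.mem_univ i)
    have h2 := (Finset.sum_eq_zero_iff_of_nonneg (fun j _ =>
      abs_nonneg _)).mp h1 j (Finset.mem_univ j)
    exact abs_eq_zero.mp h2
  have hcomm : ∀ i j, (X.A * topLeft W) i j = (topLeft W * Y.A) i j := by
    intro i j
    have := hmat0 i j
    rw [Matrix.sub_apply] at this
    linarith
  have hA : ∀ i i', X.A i i' = Y.A (σ i) (σ i') := by
    intro i i'
    have h := hcomm i (σ i')
    rw [Matrix.mul_apply, Matrix.mul_apply] at h
    have hL : (∑ k, X.A i k * topLeft W k (σ i')) = X.A i i' := by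
      rw [Finset.sum_eq_single i' (fun k _ hne => by
        rw [htop, if_neg (fun hh => hne (hinj hh)), mul_zero])
        (fun h => absurd (Finset.mem_univ _) h)]
      rw [htop, if_pos rfl, mul_one]
    have hR : (∑ k, topLeft W i k * Y.A k (σ i')) = Y.A (σ i) (σ i') := by
      rw [Finset.sum_eq_single (σ i) (fun k _ hne => by
        rw [htop, if_neg (fun hh => hne hh.symm), zero_mul])
        (fun h => absurd (Finset.mem_univ _) h)]
      rw [htop, if_pos rfl, one_mul]
    rw [← hL, ← hR, h]
  exact graphEq_of_perm σ ⟨hinj, hsurj⟩ hnode hA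

lemma gospaLP_eq_zero_iff (p c ε : ℝ) (hp : 1 ≤ p) (hc : 0 < c) (hε : 0 < ε) (X Y : Graph 𝕏) :
    gospaLP p c ε X Y = 0 ↔ GraphEq X Y := by
  have hp0 : p ≠ 0 := by positivity
  have hip0 : (1:ℝ)/p ≠ 0 := one_div_ne_zero hp0
  constructor
  · intro h
    unfold gospaLP at h
    have hs0 : sInf {v | ∃ W ∈ WbarSet X.n Y.n, v = obj p c ε X Y W} = 0 :=
      (Real.rpow_eq_zero (sInf_valSet_nonneg p c ε hp hc hε X Y) hip0).mp h
    obtain ⟨W, hWmem, hWinf, -⟩ := exists_min p c ε hp hc hε X Y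
    exact graphEq_of_obj_zero p c ε hp hc hε hWmem (by rw [← hWinf, hs0])
  · intro h
    obtain ⟨σ, hbij, hnode, hA⟩ := perm_of_graphEq h
    have hzero : (0:ℝ) ∈ {v | ∃ W ∈ WbarSet X.n Y.n, v = obj p c ε X Y W} :=
      ⟨permPlan X Y σ, permPlan_mem X Y σ hbij,
        (obj_permPlan p c ε hp X Y σ hbij hnode hA).symm⟩
    have h1 : sInf {v | ∃ W ∈ WbarSet X.n Y.n, v = obj p c ε X Y W} = 0 :=
      le_antisymm (csInf_le (valSet_bddBelow p c ε hp hc hε X Y) hzero)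
        (sInf_valSet_nonneg p c ε hp hc hε X Y)
    unfold gospaLP
    rw [h1, Real.zero_rpow hip0]

lemma gospaLP_symm (p c ε : ℝ) (X Y : Graph 𝕏) :
    gospaLP p c ε X Y = gospaLP p c ε Y X := by
  unfold gospaLP
  congr 1
  have : {v | ∃ W ∈ WbarSet X.n Y.n, v = obj p c ε X Y W}
      = {v | ∃ W ∈ WbarSet Y.n X.n, v = obj p c ε Y X W} := by
    ext v
    constructor
    · rintro ⟨W, hW, rfl⟩
      exact ⟨Wᵀ, transpose_mem_WbarSet hW, (obj_transpose p c ε X Y W).symm⟩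
    · rintro ⟨W, hW, rfl⟩
      exact ⟨Wᵀ, transpose_mem_WbarSet hW, (obj_transpose p c ε Y X W).symm⟩
  rw [this]

lemma onorm_add_le {m n : ℕ} (M N : Matrix (Fin m) (Fin n) ℝ) :
    onorm (M + N) ≤ onorm M + onorm N := by
  unfold onorm
  rw [← Finset.sum_add_distrib]
  refine Finset.sum_le_sum fun i _ => ?_
  rw [← Finset.sum_add_distrib]
  exact Finset.sum_le_sum fun j _ => abs_add_le _ _

lemma onorm_mul_le_right {m n k : ℕ} (M : Matrix (Fin m) (Fin n) ℝ)
    (S : Matrix (Fin n) (Fin k) ℝ) (hS : ∀ i j, 0 ≤ S i j)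
    (hrow : ∀ i, ∑ j, S i j ≤ 1) : onorm (M * S) ≤ onorm M := by
  unfold onorm
  refine Finset.sum_le_sum fun i _ => ?_
  calc ∑ j, |(M * S) i j|
      ≤ ∑ j, ∑ t, |M i t| * S t j := by
        refine Finset.sum_le_sum fun j _ => ?_
        rw [Matrix.mul_apply]
        refine le_trans (Finset.abs_sum_le_sum_abs _ _) (Finset.sum_le_sum fun t _ => ?_)
        rw [abs_mul, abs_of_nonneg (hS t j)]
    _ = ∑ t, |M i t| * ∑ j, S t j := by
        rw [Finset.sum_comm]
        exact Finset.sum_congr rfl fun t _ => by rw [← Finset.mul_sum]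
    _ ≤ ∑ t, |M i t| * 1 :=
        Finset.sum_le_sum fun t _ => mul_le_mul_of_nonneg_left (hrow t) (abs_nonneg _)
    _ = ∑ t, |M i t| := by simp

lemma onorm_mul_le_left {m n k : ℕ} (S : Matrix (Fin m) (Fin n) ℝ)
    (M : Matrix (Fin n) (Fin k) ℝ) (hS : ∀ i j, 0 ≤ S i j)
    (hcol : ∀ j, ∑ i, S i j ≤ 1) : onorm (S * M) ≤ onorm M := by
  have := onorm_mul_le_right Mᵀ Sᵀ (fun i j => hS j i) hcol
  rwa [← Matrix.transpose_mul, onorm_transpose, onorm_transpose] at this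

lemma rpow_roundtrip1 {p x : ℝ} (hp0 : p ≠ 0) (hx : 0 ≤ x) : (x ^ (1/p)) ^ p = x := by
  rw [← Real.rpow_mul hx, one_div_mul_cancel hp0, Real.rpow_one]

lemma weighted_minkowski {ι : Type*} [Fintype ι] {p : ℝ} (hp : 1 ≤ p)
    (μ a b : ι → ℝ) (hμ : ∀ i, 0 ≤ μ i) (ha : ∀ i, 0 ≤ a i) (hb : ∀ i, 0 ≤ b i) :
    (∑ i, μ i * (a i + b i) ^ p) ^ (1/p)
      ≤ (∑ i, μ i * a i ^ p) ^ (1/p) + (∑ i, μ i * b i ^ p) ^ (1/p) := by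
  have hp0 : p ≠ 0 := by positivity
  have key : ∀ (x : ι → ℝ), (∀ i, 0 ≤ x i) →
      ∀ i, μ i * x i ^ p = (μ i ^ (1/p) * x i) ^ p := by
    intro x hx i
    rw [Real.mul_rpow (Real.rpow_nonneg (hμ i) _) (hx i), ← Real.rpow_mul (hμ i),
      one_div_mul_cancel hp0, Real.rpow_one]
  have h1 : (∑ i, μ i * (a i + b i) ^ p)
      = ∑ i, (μ i ^ (1/p) * a i + μ i ^ (1/p) * b i) ^ p := by
    refine Finset.sum_congr rfl fun i _ => ?_
    rw [← mul_add]
    exact key _ (fun i => add_nonneg (ha i) (hb i)) i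
  have h2 : (∑ i, μ i * a i ^ p) = ∑ i, (μ i ^ (1/p) * a i) ^ p :=
    Finset.sum_congr rfl fun i _ => key a ha i
  have h3 : (∑ i, μ i * b i ^ p) = ∑ i, (μ i ^ (1/p) * b i) ^ p :=
    Finset.sum_congr rfl fun i _ => key b hb i
  rw [h1, h2, h3]
  exact Real.Lp_add_le_of_nonneg (f := fun i => μ i ^ (1/p) * a i)
    (g := fun i => μ i ^ (1/p) * b i) (s := Finset.univ) hp
    (fun i _ => mul_nonneg (Real.rpow_nonneg (hμ i) _) (ha i))
    (fun i _ => mul_nonneg (Real.rpow_nonneg (hμ i) _) (hb i))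

lemma Dmat_eval_cc {p c : ℝ} (X Y : Graph 𝕏) {i : Fin (X.n+1)} {j : Fin (Y.n+1)}
    (hi : (i:ℕ) < X.n) (hj : (j:ℕ) < Y.n) :
    Dmat p c X Y i j = dist (X.nodes ⟨i, hi⟩) (Y.nodes ⟨j, hj⟩) ^ p := by
  simp [Dmat, hi, hj]

lemma Dmat_eval_cd {p c : ℝ} (X Y : Graph 𝕏) {i : Fin (X.n+1)} {j : Fin (Y.n+1)}
    (hi : (i:ℕ) < X.n) (hj : ¬ (j:ℕ) < Y.n) : Dmat p c X Y i j = c ^ p / 2 := by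
  simp [Dmat, hi, hj]

lemma Dmat_eval_dc {p c : ℝ} (X Y : Graph 𝕏) {i : Fin (X.n+1)} {j : Fin (Y.n+1)}
    (hi : ¬ (i:ℕ) < X.n) (hj : (j:ℕ) < Y.n) : Dmat p c X Y i j = c ^ p / 2 := by
  simp [Dmat, hi, hj]

lemma Dmat_eval_dd {p c : ℝ} (X Y : Graph 𝕏) {i : Fin (X.n+1)} {j : Fin (Y.n+1)}
    (hi : ¬ (i:ℕ) < X.n) (hj : ¬ (j:ℕ) < Y.n) : Dmat p c X Y i j = 0 := by
  simp [Dmat, hi, hj]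

noncomputable def compPlan {nX nZ nY : ℕ} (W1 : Matrix (Fin (nX+1)) (Fin (nZ+1)) ℝ)
    (W2 : Matrix (Fin (nZ+1)) (Fin (nY+1)) ℝ) : Matrix (Fin (nX+1)) (Fin (nY+1)) ℝ :=
  fun i j => if (i:ℕ) = nX ∧ (j:ℕ) = nY then 0 else
    (∑ k : Fin nZ, W1 i k.castSucc * W2 k.castSucc j)
    + (if (j:ℕ) = nY then W1 i (Fin.last nZ) else 0)
    + (if (i:ℕ) = nX then W2 (Fin.last nZ) j else 0)

noncomputable def routeMass {nX nZ nY : ℕ} (W1 : Matrix (Fin (nX+1)) (Fin (nZ+1)) ℝ)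
    (W2 : Matrix (Fin (nZ+1)) (Fin (nY+1)) ℝ)
    (i : Fin (nX+1)) (k : Fin (nZ+1)) (j : Fin (nY+1)) : ℝ :=
  if (k:ℕ) < nZ then W1 i k * W2 k j
  else (if (i:ℕ) < nX ∧ (j:ℕ) = nY then W1 i k else 0)
     + (if (i:ℕ) = nX ∧ (j:ℕ) < nY then W2 k j else 0)

section Comp

variable {nX nZ nY : ℕ} {W1 : Matrix (Fin (nX+1)) (Fin (nZ+1)) ℝ}
  {W2 : Matrix (Fin (nZ+1)) (Fin (nY+1)) ℝ}

lemma routeMass_nonneg (h1 : W1 ∈ WbarSet nX nZ) (h2 : W2 ∈ WbarSet nZ nY)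
    (i : Fin (nX+1)) (k : Fin (nZ+1)) (j : Fin (nY+1)) : 0 ≤ routeMass W1 W2 i k j := by
  unfold routeMass
  split_ifs <;>
    first
      | exact mul_nonneg (h1.1 _ _) (h2.1 _ _)
      | exact add_nonneg (h1.1 _ _) (h2.1 _ _)
      | exact add_nonneg (h1.1 _ _) le_rfl
      | exact add_nonneg le_rfl (h2.1 _ _)
      | exact add_nonneg le_rfl le_rfl

lemma castSucc_mk_self {n : ℕ} (k : Fin (n+1)) (hk : (k:ℕ) < n) :
    (⟨(k:ℕ), hk⟩ : Fin n).castSucc = k := by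
  apply Fin.ext
  simp

lemma compPlan_eq_sum (i : Fin (nX+1)) (j : Fin (nY+1)) (h : ¬((i:ℕ) = nX ∧ (j:ℕ) = nY)) :
    compPlan W1 W2 i j = ∑ k : Fin (nZ+1), routeMass W1 W2 i k j := by
  rw [Fin.sum_univ_castSucc]
  have hm : ∀ k : Fin nZ, routeMass W1 W2 i k.castSucc j = W1 i k.castSucc * W2 k.castSucc j := by
    intro k
    unfold routeMass
    rw [if_pos]
    simp [Fin.is_lt]
  have hl : routeMass W1 W2 i (Fin.last nZ) j
      = (if (i:ℕ) < nX ∧ (j:ℕ) = nY then W1 i (Fin.last nZ) else 0)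
        + (if (i:ℕ) = nX ∧ (j:ℕ) < nY then W2 (Fin.last nZ) j else 0) := by
    unfold routeMass
    rw [if_neg]
    simp
  rw [Finset.sum_congr rfl fun k _ => hm k, hl]
  unfold compPlan
  rw [if_neg h]
  have hi' : (i:ℕ) ≤ nX := Fin.is_le i
  have hj' : (j:ℕ) ≤ nY := Fin.is_le j
  by_cases hi : (i:ℕ) = nX <;> by_cases hj : (j:ℕ) = nY
  · exact absurd ⟨hi, hj⟩ h
  · have hj2 : (j:ℕ) < nY := lt_of_le_of_ne hj' hj
    simp [hi, hj, hj2]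
  · have hi2 : (i:ℕ) < nX := lt_of_le_of_ne hi' hi
    simp [hi, hj, hi2]
  · have hj2 : (j:ℕ) < nY := lt_of_le_of_ne hj' hj
    have hi2 : (i:ℕ) < nX := lt_of_le_of_ne hi' hi
    simp [hi, hj, hi2, hj2]

lemma routeMass_row (h1 : W1 ∈ WbarSet nX nZ) (h2 : W2 ∈ WbarSet nZ nY)
    (i : Fin (nX+1)) (k : Fin (nZ+1)) (h : (i:ℕ) < nX ∨ (k:ℕ) < nZ) :
    ∑ j, routeMass W1 W2 i k j = W1 i k := by
  by_cases hk : (k:ℕ) < nZ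
  · have : ∀ j, routeMass W1 W2 i k j = W1 i k * W2 k j := by
      intro j; unfold routeMass; rw [if_pos hk]
    rw [Finset.sum_congr rfl fun j _ => this j, ← Finset.mul_sum]
    have hsum : ∑ j, W2 k j = 1 := by
      have := h2.2.2.1 ⟨(k:ℕ), hk⟩
      rwa [castSucc_mk_self k hk] at this
    rw [hsum, mul_one]
  · have hi : (i:ℕ) < nX := h.resolve_right hk
    have : ∀ j : Fin (nY+1), routeMass W1 W2 i k j
        = if j = Fin.last nY then W1 i k else 0 := by
      intro j
      unfold routeMass
      rw [if_neg hk]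
      have : ¬((i:ℕ) = nX ∧ (j:ℕ) < nY) := fun hh => absurd hh.1 (by omega)
      rw [if_neg this, add_zero]
      by_cases hj : j = Fin.last nY
      · rw [if_pos hj, if_pos ⟨hi, by rw [hj]; simp⟩]
      · rw [if_neg hj, if_neg]
        rintro ⟨-, hj2⟩
        exact hj (Fin.ext hj2)
    rw [Finset.sum_congr rfl fun j _ => this j, Finset.sum_ite_eq' Finset.univ (Fin.last nY)]
    simp

lemma routeMass_col (h1 : W1 ∈ WbarSet nX nZ) (h2 : W2 ∈ WbarSet nZ nY)
    (k : Fin (nZ+1)) (j : Fin (nY+1)) (h : (j:ℕ) < nY ∨ (k:ℕ) < nZ) :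
    ∑ i, routeMass W1 W2 i k j = W2 k j := by
  by_cases hk : (k:ℕ) < nZ
  · have : ∀ i, routeMass W1 W2 i k j = W1 i k * W2 k j := by
      intro i; unfold routeMass; rw [if_pos hk]
    rw [Finset.sum_congr rfl fun i _ => this i, ← Finset.sum_mul]
    have hsum : ∑ i, W1 i k = 1 := by
      have := h1.2.1 ⟨(k:ℕ), hk⟩
      rwa [castSucc_mk_self k hk] at this
    rw [hsum, one_mul]
  · have hj : (j:ℕ) < nY := h.resolve_right hk
    have : ∀ i : Fin (nX+1), routeMass W1 W2 i k j
        = if i = Fin.last nX then W2 k j else 0 := by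
      intro i
      unfold routeMass
      rw [if_neg hk]
      have : ¬((i:ℕ) < nX ∧ (j:ℕ) = nY) := fun hh => absurd hh.2 (by omega)
      rw [if_neg this, zero_add]
      by_cases hi : i = Fin.last nX
      · rw [if_pos hi, if_pos ⟨by rw [hi]; simp, hj⟩]
      · rw [if_neg hi, if_neg]
        rintro ⟨hi2, -⟩
        exact hi (Fin.ext hi2)
    rw [Finset.sum_congr rfl fun i _ => this i, Finset.sum_ite_eq' Finset.univ (Fin.last nX)]
    simp

lemma compPlan_mem (h1 : W1 ∈ WbarSet nX nZ) (h2 : W2 ∈ WbarSet nZ nY) :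
    compPlan W1 W2 ∈ WbarSet nX nY := by
  refine ⟨fun i j => ?_, fun j => ?_, fun i => ?_, ?_⟩
  · have hsum : (0:ℝ) ≤ ∑ k : Fin nZ, W1 i k.castSucc * W2 k.castSucc j :=
      Finset.sum_nonneg fun k _ => mul_nonneg (h1.1 _ _) (h2.1 _ _)
    unfold compPlan
    split_ifs <;>
      first
        | exact le_rfl
        | exact add_nonneg (add_nonneg hsum (h1.1 _ _)) (h2.1 _ _)
        | exact add_nonneg (add_nonneg hsum (h1.1 _ _)) le_rfl
        | exact add_nonneg (add_nonneg hsum le_rfl) (h2.1 _ _)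
        | exact add_nonneg (add_nonneg hsum le_rfl) le_rfl
  · have hnc : ∀ i : Fin (nX+1), ¬((i:ℕ) = nX ∧ ((j.castSucc : Fin (nY+1)):ℕ) = nY) := by
      intro i
      rintro ⟨-, hj⟩
      simp at hj
      omega
    rw [Finset.sum_congr rfl fun i _ => compPlan_eq_sum i j.castSucc (hnc i)]
    rw [Finset.sum_comm]
    rw [Finset.sum_congr rfl fun k _ => routeMass_col h1 h2 k j.castSucc
      (Or.inl (by simp [Fin.is_lt]))]
    exact h2.2.1 j
  · have hnc : ∀ j : Fin (nY+1), ¬(((i.castSucc : Fin (nX+1)):ℕ) = nX ∧ (j:ℕ) = nY) := by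
      intro j
      rintro ⟨hi, -⟩
      simp at hi
      omega
    rw [Finset.sum_congr rfl fun j _ => compPlan_eq_sum i.castSucc j (hnc j)]
    rw [Finset.sum_comm]
    rw [Finset.sum_congr rfl fun k _ => routeMass_row h1 h2 i.castSucc k
      (Or.inl (by simp [Fin.is_lt]))]
    exact h1.2.2.1 i
  · unfold compPlan
    rw [if_pos ⟨by simp, by simp⟩]

lemma topLeft_compPlan : topLeft (compPlan W1 W2) = topLeft W1 * topLeft W2 := by
  ext i j
  show compPlan W1 W2 i.castSucc j.castSucc = _
  unfold compPlan
  have hi : ¬((i.castSucc : Fin (nX+1)):ℕ) = nX := by simp; omega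
  have hj : ¬((j.castSucc : Fin (nY+1)):ℕ) = nY := by simp; omega
  rw [if_neg (fun h => hi h.1), if_neg hj, if_neg hi, add_zero, add_zero,
    Matrix.mul_apply]
  rfl

end Comp

lemma rpow_roundtrip2 {p x : ℝ} (hp0 : p ≠ 0) (hx : 0 ≤ x) : (x ^ p) ^ (1/p) = x := by
  rw [← Real.rpow_mul hx, mul_one_div_cancel hp0, Real.rpow_one]

lemma sum_prod3 {A B C : Type*} [Fintype A] [Fintype B] [Fintype C] (f : A × B × C → ℝ) :
    ∑ t, f t = ∑ i, ∑ k, ∑ j, f (i, k, j) := by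
  rw [Fintype.sum_prod_type]
  exact Finset.sum_congr rfl fun i _ => by rw [Fintype.sum_prod_type]

lemma obj_triangle (p c ε : ℝ) (hp : 1 ≤ p) (hc : 0 < c) (hε : 0 < ε) (X Z Y : Graph 𝕏)
    {W1 : Matrix (Fin (X.n+1)) (Fin (Z.n+1)) ℝ} {W2 : Matrix (Fin (Z.n+1)) (Fin (Y.n+1)) ℝ}
    (h1 : W1 ∈ WbarSet X.n Z.n) (h2 : W2 ∈ WbarSet Z.n Y.n) :
    obj p c ε X Y (compPlan W1 W2) ^ (1/p)
      ≤ obj p c ε X Z W1 ^ (1/p) + obj p c ε Z Y W2 ^ (1/p) := by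
  have hp0 : p ≠ 0 := by positivity
  have hppos : (0:ℝ) ≤ p := by linarith
  set E1 := ε ^ p / 2 * onorm (X.A * topLeft W1 - topLeft W1 * Z.A) with hE1def
  set E2 := ε ^ p / 2 * onorm (Z.A * topLeft W2 - topLeft W2 * Y.A) with hE2def
  have hepsnn : (0:ℝ) ≤ ε ^ p / 2 := by positivity
  have hE1n : 0 ≤ E1 := mul_nonneg hepsnn (onorm_nonneg _)
  have hE2n : 0 ≤ E2 := mul_nonneg hepsnn (onorm_nonneg _)
  have hcterm : ((c ^ p / 2) ^ (1/p)) ^ p = c ^ p / 2 := rpow_roundtrip1 hp0 (by positivity)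
  have hctermnn : (0:ℝ) ≤ (c ^ p / 2) ^ (1/p) := Real.rpow_nonneg (by positivity) _
  -- the route functions
  set μf : (Fin (X.n+1) × Fin (Z.n+1) × Fin (Y.n+1)) ⊕ Bool → ℝ :=
    Sum.elim (fun t => routeMass W1 W2 t.1 t.2.1 t.2.2) (fun _ => 1) with hμfdef
  set af : (Fin (X.n+1) × Fin (Z.n+1) × Fin (Y.n+1)) ⊕ Bool → ℝ :=
    Sum.elim (fun t => Dmat p c X Z t.1 t.2.1 ^ (1/p))
      (fun s => cond s 0 (E1 ^ (1/p))) with hafdef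
  set bf : (Fin (X.n+1) × Fin (Z.n+1) × Fin (Y.n+1)) ⊕ Bool → ℝ :=
    Sum.elim (fun t => Dmat p c Z Y t.2.1 t.2.2 ^ (1/p))
      (fun s => cond s (E2 ^ (1/p)) 0) with hbfdef
  have hμn : ∀ t, 0 ≤ μf t := by
    rintro (⟨i, k, j⟩ | s)
    · exact routeMass_nonneg h1 h2 i k j
    · exact zero_le_one
  have han : ∀ t, 0 ≤ af t := by
    rintro (⟨i, k, j⟩ | s)
    · exact Real.rpow_nonneg (Dmat_nonneg p c hp hc X Z i k) _
    · cases s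
      · exact Real.rpow_nonneg hE1n _
      · exact le_rfl
  have hbn : ∀ t, 0 ≤ bf t := by
    rintro (⟨i, k, j⟩ | s)
    · exact Real.rpow_nonneg (Dmat_nonneg p c hp hc Z Y k j) _
    · cases s
      · exact le_rfl
      · exact Real.rpow_nonneg hE2n _
  have hmink := weighted_minkowski hp μf af bf hμn han hbn
  -- C1 : the a-marginal is obj1
  have hA1 : ∀ (i : Fin (X.n+1)) (k : Fin (Z.n+1)),
      (∑ j, routeMass W1 W2 i k j) * Dmat p c X Z i k = Dmat p c X Z i k * W1 i k := by
    intro i k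
    by_cases h : (i:ℕ) < X.n ∨ (k:ℕ) < Z.n
    · rw [routeMass_row h1 h2 i k h, mul_comm]
    · have hi' : ¬(i:ℕ) < X.n := fun hh => h (Or.inl hh)
      have hk' : ¬(k:ℕ) < Z.n := fun hh => h (Or.inr hh)
      rw [Dmat_eval_dd X Z hi' hk', mul_zero, zero_mul]
  have hC1 : ∑ t, μf t * af t ^ p = obj p c ε X Z W1 := by
    rw [Fintype.sum_sum_type, Fintype.sum_bool]
    have hboolpart : μf (Sum.inr true) * af (Sum.inr true) ^ p
        + μf (Sum.inr false) * af (Sum.inr false) ^ p = E1 := by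
      simp only [hμfdef, hafdef, Sum.elim_inr, cond_true, cond_false]
      rw [Real.zero_rpow hp0, rpow_roundtrip1 hp0 hE1n]
      ring
    have hmain : ∑ t : Fin (X.n+1) × Fin (Z.n+1) × Fin (Y.n+1),
        μf (Sum.inl t) * af (Sum.inl t) ^ p = Matrix.trace ((Dmat p c X Z)ᵀ * W1) := by
      simp only [hμfdef, hafdef, Sum.elim_inl, Fintype.sum_prod_type]
      rw [trace_eq_sum]
      refine Finset.sum_congr rfl fun i _ => ?_
      refine Finset.sum_congr rfl fun k _ => ?_
      have hrt : (Dmat p c X Z i k ^ (1/p)) ^ p = Dmat p c X Z i k :=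
        rpow_roundtrip1 hp0 (Dmat_nonneg p c hp hc X Z i k)
      calc (∑ j, routeMass W1 W2 i k j * (Dmat p c X Z i k ^ (1/p)) ^ p)
          = ∑ j, routeMass W1 W2 i k j * Dmat p c X Z i k := by
            refine Finset.sum_congr rfl fun j _ => ?_
            rw [hrt]
        _ = (∑ j, routeMass W1 W2 i k j) * Dmat p c X Z i k := (Finset.sum_mul _ _ _).symm
        _ = Dmat p c X Z i k * W1 i k := hA1 i k
    rw [hboolpart, hmain]
    rfl
  -- C2 : the b-marginal is obj2
  have hA2 : ∀ (k : Fin (Z.n+1)) (j : Fin (Y.n+1)),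
      (∑ i, routeMass W1 W2 i k j) * Dmat p c Z Y k j = Dmat p c Z Y k j * W2 k j := by
    intro k j
    by_cases h : (j:ℕ) < Y.n ∨ (k:ℕ) < Z.n
    · rw [routeMass_col h1 h2 k j h, mul_comm]
    · have hj' : ¬(j:ℕ) < Y.n := fun hh => h (Or.inl hh)
      have hk' : ¬(k:ℕ) < Z.n := fun hh => h (Or.inr hh)
      rw [Dmat_eval_dd Z Y hk' hj', mul_zero, zero_mul]
  have hC2 : ∑ t, μf t * bf t ^ p = obj p c ε Z Y W2 := by
    rw [Fintype.sum_sum_type, Fintype.sum_bool]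
    have hboolpart : μf (Sum.inr true) * bf (Sum.inr true) ^ p
        + μf (Sum.inr false) * bf (Sum.inr false) ^ p = E2 := by
      simp only [hμfdef, hbfdef, Sum.elim_inr, cond_true, cond_false]
      rw [Real.zero_rpow hp0, rpow_roundtrip1 hp0 hE2n]
      ring
    have hmain : ∑ t : Fin (X.n+1) × Fin (Z.n+1) × Fin (Y.n+1),
        μf (Sum.inl t) * bf (Sum.inl t) ^ p = Matrix.trace ((Dmat p c Z Y)ᵀ * W2) := by
      simp only [hμfdef, hbfdef, Sum.elim_inl, Fintype.sum_prod_type]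
      rw [trace_eq_sum]
      rw [Finset.sum_comm]
      refine Finset.sum_congr rfl fun k _ => ?_
      rw [Finset.sum_comm]
      refine Finset.sum_congr rfl fun j _ => ?_
      have hrt : (Dmat p c Z Y k j ^ (1/p)) ^ p = Dmat p c Z Y k j :=
        rpow_roundtrip1 hp0 (Dmat_nonneg p c hp hc Z Y k j)
      calc (∑ i, routeMass W1 W2 i k j * (Dmat p c Z Y k j ^ (1/p)) ^ p)
          = ∑ i, routeMass W1 W2 i k j * Dmat p c Z Y k j := by
            refine Finset.sum_congr rfl fun i _ => ?_
            rw [hrt]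
        _ = (∑ i, routeMass W1 W2 i k j) * Dmat p c Z Y k j := (Finset.sum_mul _ _ _).symm
        _ = Dmat p c Z Y k j * W2 k j := hA2 k j
    rw [hboolpart, hmain]
    rfl
  -- C3 : obj of the composite plan is dominated
  have hroute : ∀ (i : Fin (X.n+1)) (k : Fin (Z.n+1)) (j : Fin (Y.n+1)),
      Dmat p c X Y i j * routeMass W1 W2 i k j
        ≤ routeMass W1 W2 i k j
          * (Dmat p c X Z i k ^ (1/p) + Dmat p c Z Y k j ^ (1/p)) ^ p := by
    intro i k j
    have hmn := routeMass_nonneg h1 h2 i k j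
    have hanz : 0 ≤ Dmat p c X Z i k ^ (1/p) := Real.rpow_nonneg (Dmat_nonneg p c hp hc X Z i k) _
    have hbnz : 0 ≤ Dmat p c Z Y k j ^ (1/p) := Real.rpow_nonneg (Dmat_nonneg p c hp hc Z Y k j) _
    by_cases hk : (k:ℕ) < Z.n
    · rw [mul_comm]
      refine mul_le_mul_of_nonneg_left ?_ hmn
      by_cases hi : (i:ℕ) < X.n <;> by_cases hj : (j:ℕ) < Y.n
      · rw [Dmat_eval_cc X Y hi hj, Dmat_eval_cc X Z hi hk, Dmat_eval_cc Z Y hk hj,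
          rpow_roundtrip2 hp0 dist_nonneg, rpow_roundtrip2 hp0 dist_nonneg]
        exact Real.rpow_le_rpow dist_nonneg
          (dist_triangle (X.nodes ⟨i, hi⟩) (Z.nodes ⟨k, hk⟩) (Y.nodes ⟨j, hj⟩)) hppos
      · rw [Dmat_eval_cd X Y hi hj, Dmat_eval_cd Z Y hk hj]
        calc c ^ p / 2 = ((c ^ p / 2) ^ (1/p)) ^ p := hcterm.symm
          _ ≤ _ := Real.rpow_le_rpow hctermnn (le_add_of_nonneg_left hanz) hppos
      · rw [Dmat_eval_dc X Y hi hj, Dmat_eval_dc X Z hi hk]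
        calc c ^ p / 2 = ((c ^ p / 2) ^ (1/p)) ^ p := hcterm.symm
          _ ≤ _ := Real.rpow_le_rpow hctermnn (le_add_of_nonneg_right hbnz) hppos
      · rw [Dmat_eval_dd X Y hi hj]
        exact Real.rpow_nonneg (add_nonneg hanz hbnz) p
    · have hmassdef : routeMass W1 W2 i k j
          = (if (i:ℕ) < X.n ∧ (j:ℕ) = Y.n then W1 i k else 0)
            + (if (i:ℕ) = X.n ∧ (j:ℕ) < Y.n then W2 k j else 0) := by
        unfold routeMass
        rw [if_neg hk]
      by_cases hc1 : (i:ℕ) < X.n ∧ (j:ℕ) = Y.n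
      · have hc2 : ¬((i:ℕ) = X.n ∧ (j:ℕ) < Y.n) := by omega
        rw [hmassdef, if_pos hc1, if_neg hc2, add_zero, mul_comm]
        refine mul_le_mul_of_nonneg_left ?_ (h1.1 _ _)
        rw [Dmat_eval_cd X Y hc1.1 (by omega), Dmat_eval_cd X Z hc1.1 hk]
        calc c ^ p / 2 = ((c ^ p / 2) ^ (1/p)) ^ p := hcterm.symm
          _ ≤ _ := Real.rpow_le_rpow hctermnn (le_add_of_nonneg_right hbnz) hppos
      · by_cases hc2 : (i:ℕ) = X.n ∧ (j:ℕ) < Y.n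
        · rw [hmassdef, if_neg hc1, if_pos hc2, zero_add, mul_comm]
          refine mul_le_mul_of_nonneg_left ?_ (h2.1 _ _)
          rw [Dmat_eval_dc X Y (by omega) hc2.2, Dmat_eval_dc Z Y hk hc2.2]
          calc c ^ p / 2 = ((c ^ p / 2) ^ (1/p)) ^ p := hcterm.symm
            _ ≤ _ := Real.rpow_le_rpow hctermnn (le_add_of_nonneg_left hanz) hppos
        · rw [hmassdef, if_neg hc1, if_neg hc2, add_zero, mul_zero, zero_mul]
  -- trace bound
  have hT : Matrix.trace ((Dmat p c X Y)ᵀ * compPlan W1 W2)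
      ≤ ∑ i, ∑ k, ∑ j, routeMass W1 W2 i k j
          * (Dmat p c X Z i k ^ (1/p) + Dmat p c Z Y k j ^ (1/p)) ^ p := by
    have hstep : ∀ (i : Fin (X.n+1)) (j : Fin (Y.n+1)),
        Dmat p c X Y i j * compPlan W1 W2 i j
          ≤ ∑ k, routeMass W1 W2 i k j
              * (Dmat p c X Z i k ^ (1/p) + Dmat p c Z Y k j ^ (1/p)) ^ p := by
      intro i j
      by_cases hcor : (i:ℕ) = X.n ∧ (j:ℕ) = Y.n
      · rw [Dmat_eval_dd X Y (by omega) (by omega), zero_mul]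
        exact Finset.sum_nonneg fun k _ => mul_nonneg (routeMass_nonneg h1 h2 i k j)
          (Real.rpow_nonneg (add_nonneg (Real.rpow_nonneg (Dmat_nonneg p c hp hc X Z i k) _)
            (Real.rpow_nonneg (Dmat_nonneg p c hp hc Z Y k j) _)) _)
      · rw [compPlan_eq_sum i j hcor, Finset.mul_sum]
        exact Finset.sum_le_sum fun k _ => hroute i k j
    rw [trace_eq_sum]
    calc ∑ i, ∑ j, Dmat p c X Y i j * compPlan W1 W2 i j
        ≤ ∑ i, ∑ j, ∑ k, routeMass W1 W2 i k j
            * (Dmat p c X Z i k ^ (1/p) + Dmat p c Z Y k j ^ (1/p)) ^ p :=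
          Finset.sum_le_sum fun i _ => Finset.sum_le_sum fun j _ => hstep i j
      _ = _ := Finset.sum_congr rfl fun i _ => Finset.sum_comm
  -- edge bound
  have hP2row : ∀ k : Fin Z.n, ∑ j : Fin Y.n, topLeft W2 k j ≤ 1 := by
    intro k
    have hr := h2.2.2.1 k
    rw [Fin.sum_univ_castSucc] at hr
    have hnn := h2.1 k.castSucc (Fin.last Y.n)
    have he : ∀ j : Fin Y.n, topLeft W2 k j = W2 k.castSucc j.castSucc := fun _ => rfl
    rw [Finset.sum_congr rfl fun j _ => he j]
    linarith
  have hP1col : ∀ k : Fin Z.n, ∑ i : Fin X.n, topLeft W1 i k ≤ 1 := by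
    intro k
    have hr := h1.2.1 k
    rw [Fin.sum_univ_castSucc] at hr
    have hnn := h1.1 (Fin.last X.n) k.castSucc
    have he : ∀ i : Fin X.n, topLeft W1 i k = W1 i.castSucc k.castSucc := fun _ => rfl
    rw [Finset.sum_congr rfl fun i _ => he i]
    linarith
  have hEbound : ε ^ p / 2 * onorm (X.A * topLeft (compPlan W1 W2)
      - topLeft (compPlan W1 W2) * Y.A) ≤ E1 + E2 := by
    rw [topLeft_compPlan]
    have hsplit : X.A * (topLeft W1 * topLeft W2) - topLeft W1 * topLeft W2 * Y.A
        = (X.A * topLeft W1 - topLeft W1 * Z.A) * topLeft W2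
          + topLeft W1 * (Z.A * topLeft W2 - topLeft W2 * Y.A) := by
      simp only [Matrix.sub_mul, Matrix.mul_sub, Matrix.mul_assoc]
      abel
    rw [hsplit]
    have hb1 : onorm ((X.A * topLeft W1 - topLeft W1 * Z.A) * topLeft W2)
        ≤ onorm (X.A * topLeft W1 - topLeft W1 * Z.A) :=
      onorm_mul_le_right _ _ (fun a b => h2.1 _ _) hP2row
    have hb2 : onorm (topLeft W1 * (Z.A * topLeft W2 - topLeft W2 * Y.A))
        ≤ onorm (Z.A * topLeft W2 - topLeft W2 * Y.A) :=
      onorm_mul_le_left _ _ (fun a b => h1.1 _ _) hP1col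
    calc ε ^ p / 2 * onorm ((X.A * topLeft W1 - topLeft W1 * Z.A) * topLeft W2
          + topLeft W1 * (Z.A * topLeft W2 - topLeft W2 * Y.A))
        ≤ ε ^ p / 2 * (onorm ((X.A * topLeft W1 - topLeft W1 * Z.A) * topLeft W2)
            + onorm (topLeft W1 * (Z.A * topLeft W2 - topLeft W2 * Y.A))) :=
          mul_le_mul_of_nonneg_left (onorm_add_le _ _) hepsnn
      _ ≤ ε ^ p / 2 * (onorm (X.A * topLeft W1 - topLeft W1 * Z.A)
            + onorm (Z.A * topLeft W2 - topLeft W2 * Y.A)) :=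
          mul_le_mul_of_nonneg_left (add_le_add hb1 hb2) hepsnn
      _ = E1 + E2 := by rw [hE1def, hE2def]; ring
  -- total bound on the composite objective
  have hC3 : obj p c ε X Y (compPlan W1 W2) ≤ ∑ t, μf t * (af t + bf t) ^ p := by
    have hsum3 : ∑ t, μf t * (af t + bf t) ^ p
        = (∑ i, ∑ k, ∑ j, routeMass W1 W2 i k j
            * (Dmat p c X Z i k ^ (1/p) + Dmat p c Z Y k j ^ (1/p)) ^ p) + (E2 + E1) := by
      rw [Fintype.sum_sum_type, Fintype.sum_bool]
      congr 1
      · simp only [hμfdef, hafdef, hbfdef, Sum.elim_inl, Fintype.sum_prod_type]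
      · simp only [hμfdef, hafdef, hbfdef, Sum.elim_inr, cond_true, cond_false]
        rw [zero_add, add_zero, one_mul, one_mul, rpow_roundtrip1 hp0 hE2n,
          rpow_roundtrip1 hp0 hE1n]
    rw [hsum3]
    unfold obj
    linarith
  have hobjnn : 0 ≤ obj p c ε X Y (compPlan W1 W2) :=
    obj_nonneg p c ε hp hc hε X Y (compPlan_mem h1 h2)
  calc obj p c ε X Y (compPlan W1 W2) ^ (1/p)
      ≤ (∑ t, μf t * (af t + bf t) ^ p) ^ (1/p) :=
        Real.rpow_le_rpow hobjnn hC3 (by positivity)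
    _ ≤ (∑ t, μf t * af t ^ p) ^ (1/p) + (∑ t, μf t * bf t ^ p) ^ (1/p) := hmink
    _ = _ := by rw [hC1, hC2]

/-- For `1 ≤ p < ∞`, `c > 0`, `ε > 0` and base metric `d`, the LP
graph GOSPA distance `d̄^{(c,ε)}` is a metric on the space of undirected unweighted
graphs with node attributes: identity, symmetry and the triangle inequality hold. -/
theorem lp_graph_gospa_is_metric (p c ε : ℝ) (hp : 1 ≤ p) (hc : 0 < c) (hε : 0 < ε) :
    (∀ X Y : Graph 𝕏, gospaLP p c ε X Y = 0 ↔ GraphEq X Y) ∧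
    (∀ X Y : Graph 𝕏, gospaLP p c ε X Y = gospaLP p c ε Y X) ∧
    (∀ X Y Z : Graph 𝕏,
      gospaLP p c ε X Y ≤ gospaLP p c ε X Z + gospaLP p c ε Z Y) := by
  refine ⟨fun X Y => gospaLP_eq_zero_iff p c ε hp hc hε X Y,
    fun X Y => gospaLP_symm p c ε X Y, fun X Y Z => ?_⟩
  obtain ⟨W1, h1, hinf1, -⟩ := exists_min p c ε hp hc hε X Z
  obtain ⟨W2, h2, hinf2, -⟩ := exists_min p c ε hp hc hε Z Y
  have htri := obj_triangle p c ε hp hc hε X Z Y h1 h2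
  have hmem : obj p c ε X Y (compPlan W1 W2)
      ∈ {v | ∃ W ∈ WbarSet X.n Y.n, v = obj p c ε X Y W} :=
    ⟨compPlan W1 W2, compPlan_mem h1 h2, rfl⟩
  have hle : gospaLP p c ε X Y ≤ obj p c ε X Y (compPlan W1 W2) ^ (1/p) := by
    unfold gospaLP
    exact Real.rpow_le_rpow (sInf_valSet_nonneg p c ε hp hc hε X Y)
      (csInf_le (valSet_bddBelow p c ε hp hc hε X Y) hmem) (by positivity)
  have hXZ : gospaLP p c ε X Z = obj p c ε X Z W1 ^ (1/p) := by
    unfold gospaLP; rw [hinf1]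
  have hZY : gospaLP p c ε Z Y = obj p c ε Z Y W2 ^ (1/p) := by
    unfold gospaLP; rw [hinf2]
  rw [hXZ, hZY]
  exact le_trans hle htri

end GraphGOSPA
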